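/- Let G be a unit-disk graph on V ⊆ ℝ², let u ∈ V lie in a grid cell C of side length c = √15/10 with center g, and let r be the representative of C. Then u and r are adjacent or equal in G, i.e., hop_G(u, r) ≤ 1. -/
import Mathlib
set_option maxHeartbeats 800000


/-- The set `𝒞₁(g)` of vertices of triangles of the unit-disk graph on `V` containing `g`. -/
def triCand (V : Set (EuclideanSpace ℝ (Fin 2))) (g : EuclideanSpace ℝ (Fin 2)) :
    Set (EuclideanSpace ℝ (Fin 2)) :=
  {v ∈ V | ∃ a ∈ V, ∃ b ∈ V, dist v a ≤ 1 ∧ dist a b ≤ 1 ∧ dist v b ≤ 1 ∧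
    g ∈ convexHull ℝ ({v, a, b} : Set (EuclideanSpace ℝ (Fin 2)))}

/-- The set `𝒞₂(g)` of vertices incident to an edge of the unit-disk graph on `V`
intersecting the cell `C`. -/
def edgeCand (V C : Set (EuclideanSpace ℝ (Fin 2))) : Set (EuclideanSpace ℝ (Fin 2)) :=
  {v ∈ V | ∃ w ∈ V, dist v w ≤ 1 ∧ (segment ℝ v w ∩ C).Nonempty}

/-- `r` is the representative of the cell `C` with center `g`: the candidate from `𝒞₁(g)`
closest to `g` if `𝒞₁(g) ≠ ∅`, otherwise the candidate from `𝒞₂(g)` closest to `g`. -/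
def IsRep (V C : Set (EuclideanSpace ℝ (Fin 2))) (g r : EuclideanSpace ℝ (Fin 2)) : Prop :=
  (r ∈ triCand V g ∧ ∀ v ∈ triCand V g, dist g r ≤ dist g v) ∨
  (triCand V g = ∅ ∧ r ∈ edgeCand V C ∧ ∀ v ∈ edgeCand V C, dist g r ≤ dist g v)

/-- If `u ∈ V` lies in a grid cell `C` of side `c = √15/10` with center `g`
and representative `r`, then `u` and `r` are adjacent or equal in the unit-disk graph,
i.e. `hop_G(u, r) ≤ 1` (equivalently `dist u r ≤ 1`). -/
theorem stmt_8 (V : Set (EuclideanSpace ℝ (Fin 2))) (c : ℝ) (hc : c = Real.sqrt 15 / 10)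
    (g : EuclideanSpace ℝ (Fin 2))
    (C : Set (EuclideanSpace ℝ (Fin 2)))
    (hC : C = {x | ∀ i, |x i - g i| ≤ c / 2})
    (u r : EuclideanSpace ℝ (Fin 2)) (hu : u ∈ V) (huC : u ∈ C)
    (hr : IsRep V C g r) :
    dist u r ≤ 1 := by
  have hc0 : (0:ℝ) ≤ c := by rw [hc]; positivity
  have hcsq : c ^ 2 = 15 / 100 := by
    rw [hc]; rw [div_pow, Real.sq_sqrt (by norm_num : (15:ℝ) ≥ 0)]; norm_num
  -- bound dist u g ≤ 1/3
  have hug : dist u g ≤ 1 / 3 := by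
    have h1 : ∀ i, |u i - g i| ≤ c / 2 := by rw [hC] at huC; exact huC
    have h2 : dist u g ≤ Real.sqrt (2 * (c / 2) ^ 2) := by
      rw [EuclideanSpace.dist_eq]
      apply Real.sqrt_le_sqrt
      have h3 : ∀ i : Fin 2, dist (u i) (g i) ^ 2 ≤ (c / 2) ^ 2 := by
        intro i
        have := h1 i
        rw [Real.dist_eq]
        nlinarith [abs_nonneg (u i - g i)]
      calc ∑ i, dist (u i) (g i) ^ 2 ≤ ∑ _i : Fin 2, (c / 2) ^ 2 :=
            Finset.sum_le_sum (fun i _ => h3 i)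
        _ = 2 * (c / 2) ^ 2 := by simp [Finset.sum_const]
    have h4 : Real.sqrt (2 * (c / 2) ^ 2) ≤ 1 / 3 := by
      have : 2 * (c / 2) ^ 2 ≤ (1 / 3 : ℝ) ^ 2 := by nlinarith
      calc Real.sqrt (2 * (c / 2) ^ 2) ≤ Real.sqrt ((1 / 3 : ℝ) ^ 2) :=
            Real.sqrt_le_sqrt this
        _ = 1 / 3 := Real.sqrt_sq (by norm_num)
    linarith
  rcases hr with ⟨hrt, hmin⟩ | ⟨-, hre, hmin⟩
  · -- case 1: triangle candidates
    obtain ⟨hrV, a, ha, b, hb, hra, hab, hrb, hg⟩ := hrt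
    -- a and b are also in triCand
    have haT : a ∈ triCand V g := by
      refine ⟨ha, r, hrV, b, hb, by rwa [dist_comm], hrb, hab, ?_⟩
      have hset : ({a, r, b} : Set (EuclideanSpace ℝ (Fin 2))) = {r, a, b} := by
        rw [Set.insert_comm]
      rwa [hset]
    have hbT : b ∈ triCand V g := by
      refine ⟨hb, a, ha, r, hrV, by rwa [dist_comm], by rwa [dist_comm], by rwa [dist_comm], ?_⟩
      have hset : ({b, a, r} : Set (EuclideanSpace ℝ (Fin 2))) = {r, a, b} := by
        ext x; simp; tauto
      rwa [hset]
    -- decompose g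
    rw [show ({r, a, b} : Set (EuclideanSpace ℝ (Fin 2))) = insert r {a, b} from rfl,
      convexHull_insert (Set.insert_nonempty a {b}), convexHull_pair,
      mem_convexJoin] at hg
    obtain ⟨x, hx, z, hz, hgseg⟩ := hg
    rw [Set.mem_singleton_iff] at hx
    rw [hx] at hgseg
    obtain ⟨s, t, hs, ht, hst, hzeq⟩ := hz
    obtain ⟨p, q, hp, hq, hpq, hgeq⟩ := hgseg
    -- key bound dist g r ≤ 2/3
    have hkey : dist g r ≤ 2 / 3 := by
      have hrA : ‖r - a‖ ≤ 1 := by rw [← dist_eq_norm]; exact hra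
      have hbA : ‖b - a‖ ≤ 1 := by rw [← dist_eq_norm, dist_comm]; exact hab
      have haB : ‖a - b‖ ≤ 1 := by rw [← dist_eq_norm]; exact hab
      have hrB : ‖r - b‖ ≤ 1 := by rw [← dist_eq_norm]; exact hrb
      rcases le_or_gt (1/3 : ℝ) p with hP | hP
      · -- ‖g - r‖ ≤ q ≤ 2/3
        have hzr : ‖z - r‖ ≤ 1 := by
          have hza : z ∈ segment ℝ a b := ⟨s, t, hs, ht, hst, hzeq⟩
          have hmem : z ∈ Metric.closedBall r 1 :=
            (convex_closedBall r 1).segment_subset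
              (by simpa [Metric.mem_closedBall, dist_comm] using hra)
              (by simpa [Metric.mem_closedBall, dist_comm] using hrb) hza
          simpa [Metric.mem_closedBall, dist_eq_norm] using hmem
        have he : g - r = q • (z - r) := by
          have hp' : p = 1 - q := by linarith
          rw [← hgeq, hp']; module
        have : dist g r = q * ‖z - r‖ := by
          rw [dist_eq_norm, he, norm_smul, Real.norm_of_nonneg hq]
        rw [this]; nlinarith
      rcases le_or_gt (1/3 : ℝ) (q * s) with hQ | hQ
      · -- use a
        have he : g - a = p • (r - a) + (q * t) • (b - a) := by
          have hp' : p = 1 - q := by linarith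
          have hs' : s = 1 - t := by linarith
          rw [← hgeq, ← hzeq, hp', hs']; module
        have hga : dist g a ≤ 2 / 3 := by
          rw [dist_eq_norm, he]
          calc ‖p • (r - a) + (q * t) • (b - a)‖
              ≤ ‖p • (r - a)‖ + ‖(q * t) • (b - a)‖ := norm_add_le _ _
            _ = p * ‖r - a‖ + (q * t) * ‖b - a‖ := by
                rw [norm_smul, norm_smul, Real.norm_of_nonneg hp,
                  Real.norm_of_nonneg (by positivity)]
            _ ≤ 2 / 3 := by
                have hsum : q * s + q * t = q := by rw [← mul_add, hst, mul_one]
                nlinarith [mul_le_mul_of_nonneg_left hrA hp,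
                  mul_le_mul_of_nonneg_left hbA (mul_nonneg hq ht), mul_nonneg hq ht]
        exact (hmin a haT).trans hga
      · -- use b
        have hQt : 1/3 ≤ q * t := by nlinarith
        have he : g - b = p • (r - b) + (q * s) • (a - b) := by
          have hp' : p = 1 - q := by linarith
          have ht' : t = 1 - s := by linarith
          rw [← hgeq, ← hzeq, hp', ht']; module
        have hgb : dist g b ≤ 2 / 3 := by
          rw [dist_eq_norm, he]
          calc ‖p • (r - b) + (q * s) • (a - b)‖
              ≤ ‖p • (r - b)‖ + ‖(q * s) • (a - b)‖ := norm_add_le _ _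
            _ = p * ‖r - b‖ + (q * s) * ‖a - b‖ := by
                rw [norm_smul, norm_smul, Real.norm_of_nonneg hp,
                  Real.norm_of_nonneg (by positivity)]
            _ ≤ 2 / 3 := by
                have hsum : q * s + q * t = q := by rw [← mul_add, hst, mul_one]
                nlinarith [mul_le_mul_of_nonneg_left hrB hp,
                  mul_le_mul_of_nonneg_left haB (mul_nonneg hq hs), mul_nonneg hq hs]
        exact (hmin b hbT).trans hgb
    calc dist u r ≤ dist u g + dist g r := dist_triangle u g r
      _ ≤ 1 / 3 + 2 / 3 := by linarith
      _ = 1 := by norm_num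
  · -- case 2: edge candidates; u itself is a candidate
    have huE : u ∈ edgeCand V C := by
      refine ⟨hu, u, hu, by simp, ⟨u, ?_, huC⟩⟩
      rw [segment_same]; rfl
    have := hmin u huE
    rw [dist_comm g u] at this
    calc dist u r ≤ dist u g + dist g r := dist_triangle u g r
      _ ≤ 1 / 3 + 1 / 3 := by linarith
      _ ≤ 1 := by norm_num
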